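/- Let μ be a probability measure on the set of density operators on ℂ^N, let ρ_{n+1} = ∫ ρ^{⊗(n+1)} dμ(ρ), and let P be a projector with Π_{n,k} defined as the symmetrized sum of k-out-of-n orderings of P and 𝟙-P. If tr(ρ_{n+1}(𝟙 ⊗ Π_{n,k})) ≠ 0, then tr(ρ_{n+1}(P ⊗ Π_{n,k}))/tr(ρ_{n+1}(𝟙 ⊗ Π_{n,k})) = q(P_{n+1,k+1})/q(P_{n,k}), where q(P_{m,j}) = ∫ tr(ρP)^j(1 - tr(ρP))^{m-j} dμ(ρ). -/

import Mathlib

open MeasureTheory ComplexOrder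

/-- The n-fold tensor (Kronecker) power of a matrix, indexed by tuples. -/
def tensorPow {N : ℕ} (M : Matrix (Fin N) (Fin N) ℂ) (n : ℕ) :
    Matrix (Fin n → Fin N) (Fin n → Fin N) ℂ :=
  Matrix.of fun x y => ∏ i, M (x i) (y i)

/-- The projector placing P in the factors of s and 𝟙 - P elsewhere. -/
def placedProj {N : ℕ} (P : Matrix (Fin N) (Fin N) ℂ) (n : ℕ)
    (s : Finset (Fin n)) : Matrix (Fin n → Fin N) (Fin n → Fin N) ℂ :=
  Matrix.of fun x y => ∏ i, (if i ∈ s then P else 1 - P) (x i) (y i)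

/-- The symmetrized k-out-of-n projector Π_{n,k}. -/
noncomputable def symProj {N : ℕ} (P : Matrix (Fin N) (Fin N) ℂ) (n k : ℕ) :
    Matrix (Fin n → Fin N) (Fin n → Fin N) ℂ :=
  ∑ s ∈ Finset.univ.powersetCard k, placedProj P n s

/-- The Kronecker product A ⊗ B of a single-site matrix with an n-site one. -/
def siteProd {N n : ℕ} (A : Matrix (Fin N) (Fin N) ℂ)
    (B : Matrix (Fin n → Fin N) (Fin n → Fin N) ℂ) :
    Matrix (Fin (n + 1) → Fin N) (Fin (n + 1) → Fin N) ℂ :=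
  Matrix.of fun x y => A (x 0) (y 0) * B (Fin.tail x) (Fin.tail y)

/-- Matrices over ℂ carry the product (Borel) σ-algebra. -/
noncomputable instance matrixMeasurableSpace {N : ℕ} :
    MeasurableSpace (Matrix (Fin N) (Fin N) ℂ) :=
  (inferInstance : MeasurableSpace (Fin N → Fin N → ℂ))

lemma trace_tensor_prod {N m : ℕ} (ρ : Matrix (Fin N) (Fin N) ℂ)
    (Q : Fin m → Matrix (Fin N) (Fin N) ℂ) :
    (tensorPow ρ m * Matrix.of (fun x y : Fin m → Fin N => ∏ i, Q i (x i) (y i))).trace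
      = ∏ i, (ρ * Q i).trace := by
  have h : ∀ i : Fin m, (ρ * Q i).trace = ∑ p : Fin N × Fin N, ρ p.1 p.2 * Q i p.2 p.1 := by
    intro i
    rw [Fintype.sum_prod_type]
    simp only [Matrix.trace, Matrix.diag, Matrix.mul_apply]
  simp only [h, Fintype.prod_sum]
  rw [← (Equiv.arrowProdEquivProdArrow (Fin m) (fun _ => Fin N) (fun _ => Fin N)).symm.sum_comp]
  simp only [Matrix.trace, Matrix.diag, Matrix.mul_apply, tensorPow, Matrix.of_apply,
    ← Finset.prod_mul_distrib, ← Fintype.sum_prod_type']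
  rfl

lemma siteProd_placed {N n : ℕ} (A P : Matrix (Fin N) (Fin N) ℂ) (s : Finset (Fin n)) :
    siteProd A (placedProj P n s)
      = Matrix.of (fun x y : Fin (n + 1) → Fin N =>
          ∏ i, (Fin.cons A (fun i => if i ∈ s then P else 1 - P) :
            Fin (n + 1) → Matrix (Fin N) (Fin N) ℂ) i (x i) (y i)) := by
  ext x y
  simp [siteProd, placedProj, Fin.prod_univ_succ, Fin.tail]

lemma trace_tensor_placed {N n : ℕ} (ρ A P : Matrix (Fin N) (Fin N) ℂ)
    {k : ℕ} (s : Finset (Fin n)) (hs : s.card = k) :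
    (tensorPow ρ (n + 1) * siteProd A (placedProj P n s)).trace
      = (ρ * A).trace * ((ρ * P).trace ^ k * (ρ * (1 - P)).trace ^ (n - k)) := by
  rw [siteProd_placed, trace_tensor_prod, Fin.prod_univ_succ]
  simp only [Fin.cons_succ, Fin.cons_zero, mul_ite, apply_ite Matrix.trace]
  congr 1
  rw [← Finset.prod_mul_prod_compl s]
  have h1 : (∏ i ∈ s, if i ∈ s then (ρ * P).trace else (ρ * (1 - P)).trace)
      = (ρ * P).trace ^ k := by
    rw [Finset.prod_congr rfl fun i hi => if_pos hi, Finset.prod_const, hs]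
  have h2 : (∏ i ∈ sᶜ, if i ∈ s then (ρ * P).trace else (ρ * (1 - P)).trace)
      = (ρ * (1 - P)).trace ^ (n - k) := by
    rw [Finset.prod_congr rfl fun i hi => if_neg (Finset.mem_compl.mp hi),
      Finset.prod_const, Finset.card_compl, hs, Fintype.card_fin]
  rw [h1, h2]

lemma trace_mul_integral {N m : ℕ} (μ : Measure (Matrix (Fin N) (Fin N) ℂ))
    (hint : ∀ x y : Fin m → Fin N, Integrable (fun ρ => tensorPow ρ m x y) μ)
    (ρm : Matrix (Fin m → Fin N) (Fin m → Fin N) ℂ)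
    (hρm : ∀ x y, ρm x y = ∫ ρ, tensorPow ρ m x y ∂μ)
    (M : Matrix (Fin m → Fin N) (Fin m → Fin N) ℂ) :
    (ρm * M).trace = ∫ ρ, (tensorPow ρ m * M).trace ∂μ := by
  simp only [Matrix.trace, Matrix.diag, Matrix.mul_apply, hρm]
  simp_rw [← integral_mul_const]
  have h1 : ∀ x : Fin m → Fin N,
      ∑ y : Fin m → Fin N, ∫ ρ, tensorPow ρ m x y * M y x ∂μ
        = ∫ ρ, ∑ y : Fin m → Fin N, tensorPow ρ m x y * M y x ∂μ :=
    fun x => (integral_finset_sum _ fun y _ => (hint x y).mul_const _).symm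
  simp_rw [h1]
  exact (integral_finset_sum _ fun x _ =>
    integrable_finset_sum _ fun y _ => (hint x y).mul_const _).symm

theorem quantum_predictive_ratio {N : ℕ} (n k : ℕ) (hk : k ≤ n)
    (μ : Measure (Matrix (Fin N) (Fin N) ℂ)) [IsProbabilityMeasure μ]
    (hdensity : ∀ᵐ ρ ∂μ, ρ.PosSemidef ∧ ρ.trace = 1)
    (hint : ∀ (m : ℕ) (x y : Fin m → Fin N),
      Integrable (fun ρ => tensorPow ρ m x y) μ)
    (P : Matrix (Fin N) (Fin N) ℂ) (hP : P.IsHermitian) (hP2 : P * P = P)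
    (ρn1 : Matrix (Fin (n + 1) → Fin N) (Fin (n + 1) → Fin N) ℂ)
    (hρn1 : ∀ x y, ρn1 x y = ∫ ρ, tensorPow ρ (n + 1) x y ∂μ)
    (q : ℕ → ℕ → ℂ)
    (hq : ∀ m j, q m j =
      ∫ ρ, (ρ * P).trace ^ j * (1 - (ρ * P).trace) ^ (m - j) ∂μ)
    (htr : (ρn1 * siteProd 1 (symProj P n k)).trace ≠ 0) :
    (ρn1 * siteProd P (symProj P n k)).trace /
        (ρn1 * siteProd 1 (symProj P n k)).trace =
      q (n + 1) (k + 1) / q n k := by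
  have key : ∀ A : Matrix (Fin N) (Fin N) ℂ,
      (ρn1 * siteProd A (symProj P n k)).trace
        = (n.choose k : ℂ) * ∫ ρ,
            (ρ * A).trace * ((ρ * P).trace ^ k * (ρ * (1 - P)).trace ^ (n - k)) ∂μ := by
    intro A
    rw [trace_mul_integral μ (hint (n + 1)) ρn1 hρn1, ← integral_const_mul]
    congr 1
    funext ρ
    have hsum : siteProd A (symProj P n k)
        = ∑ s ∈ Finset.univ.powersetCard k, siteProd A (placedProj P n s) := by
      ext x y
      simp [siteProd, symProj, Matrix.sum_apply, Finset.mul_sum]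
    rw [hsum, Matrix.mul_sum, Matrix.trace_sum,
      Finset.sum_congr rfl
        (fun s hs => trace_tensor_placed ρ A P s (Finset.mem_powersetCard_univ.mp hs)),
      Finset.sum_const, Finset.card_powersetCard, Finset.card_univ, Fintype.card_fin,
      nsmul_eq_mul]
  have hae : ∀ᵐ ρ ∂μ, (ρ * (1 : Matrix (Fin N) (Fin N) ℂ)).trace = 1 ∧
      (ρ * (1 - P)).trace = 1 - (ρ * P).trace := by
    filter_upwards [hdensity] with ρ hρ
    refine ⟨by rw [mul_one, hρ.2], ?_⟩
    rw [Matrix.mul_sub, mul_one, Matrix.trace_sub, hρ.2]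
  have hnum : (ρn1 * siteProd P (symProj P n k)).trace
      = (n.choose k : ℂ) * q (n + 1) (k + 1) := by
    rw [key P, hq]
    congr 1
    refine integral_congr_ae ?_
    filter_upwards [hae] with ρ hρ
    rw [hρ.2, Nat.succ_sub_succ]
    ring
  have hden : (ρn1 * siteProd 1 (symProj P n k)).trace
      = (n.choose k : ℂ) * q n k := by
    rw [key 1, hq]
    congr 1
    refine integral_congr_ae ?_
    filter_upwards [hae] with ρ hρ
    rw [hρ.1, hρ.2, one_mul]
  rw [hnum, hden]
  have hC : (n.choose k : ℂ) ≠ 0 := by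
    intro h
    rw [hden, h, zero_mul] at htr
    exact htr rfl
  exact mul_div_mul_left _ _ hC
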